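/- Fix u ∈ {1,…,n−1} and let β* ∈ ℝ^{(n−1)×p} be a matrix whose rows are all zero except possibly row u. Then for every i ∈ {1,…,n−1}, the i-th row of X̄ᵀX̄β* equals d_i · d_u · ( min(i,u)·(n − max(i,u)) / n ) · β*_{u,·}; that is, it equals d_i d_u (i(n−u)/n) β*_{u,·} for i ≤ u and d_i d_u (u(n−i)/n) β*_{u,·} for i > u. -/

import Mathlib

open Matrix BigOperators

/-- The `n × (n-1)` design matrix with `X i j = d j` for `i > j` (1-based). -/
noncomputable def designX (n : ℕ) (d : Fin (n-1) → ℝ) : Matrix (Fin n) (Fin (n-1)) ℝ :=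
  fun i j => if (j : ℕ) < (i : ℕ) then d j else 0

/-- Column-centering of a matrix: subtract from each entry the mean of its column. -/
noncomputable def centerCols {n m : ℕ} (M : Matrix (Fin n) (Fin m) ℝ) :
    Matrix (Fin n) (Fin m) ℝ :=
  fun i j => M i j - (∑ k : Fin n, M k j) / n

/-- The column-centered design matrix `X̄`. -/
noncomputable def Xbar (n : ℕ) (d : Fin (n-1) → ℝ) : Matrix (Fin n) (Fin (n-1)) ℝ :=
  centerCols (designX n d)

lemma sum_ite_lt (n j : ℕ) (c : ℝ) :
    ∑ k : Fin n, (if j < (k:ℕ) then c else 0) = ((n - (j+1) : ℕ) : ℝ) * c := by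
  rw [Fin.sum_univ_eq_sum_range (fun m => if j < m then c else 0) n,
    Finset.sum_ite, Finset.sum_const, Finset.sum_const]
  have : Finset.filter (fun x => j < x) (Finset.range n) = Finset.Ico (j+1) n := by
    ext x; simp; omega
  simp [this, Nat.card_Ico]

lemma key (n : ℕ) (hn : 2 ≤ n) (d : Fin (n-1) → ℝ) (i u : Fin (n-1)) :
    ∑ k : Fin n, Xbar n d k i * Xbar n d k u =
      d i * d u * (((min ((i : ℕ) + 1) ((u : ℕ) + 1) : ℕ) : ℝ)
        * ((n : ℝ) - ((max ((i : ℕ) + 1) ((u : ℕ) + 1) : ℕ) : ℝ)) / n) := by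
  have hn0 : (n : ℝ) ≠ 0 := by positivity
  have hi : (i : ℕ) + 1 ≤ n := by have := i.isLt; omega
  have hu : (u : ℕ) + 1 ≤ n := by have := u.isLt; omega
  have hSi : ∑ k : Fin n, designX n d k i = ((n - ((i:ℕ)+1) : ℕ) : ℝ) * d i := by
    simp only [designX]; exact sum_ite_lt n i (d i)
  have hSu : ∑ k : Fin n, designX n d k u = ((n - ((u:ℕ)+1) : ℕ) : ℝ) * d u := by
    simp only [designX]; exact sum_ite_lt n u (d u)
  have hT : ∑ k : Fin n, designX n d k i * designX n d k u
      = ((n - (max ((i:ℕ)) ((u:ℕ)) + 1) : ℕ) : ℝ) * (d i * d u) := by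
    rw [show (fun k : Fin n => designX n d k i * designX n d k u)
        = fun k : Fin n => if max ((i:ℕ)) ((u:ℕ)) < (k:ℕ) then d i * d u else 0 from
      funext fun k => by
        by_cases h1 : (i:ℕ) < (k:ℕ) <;> by_cases h2 : (u:ℕ) < (k:ℕ) <;>
          simp [designX, h1, h2, max_lt_iff]]
    exact sum_ite_lt n (max ((i:ℕ)) ((u:ℕ))) (d i * d u)
  have expand : ∑ k : Fin n, Xbar n d k i * Xbar n d k u
      = (∑ k : Fin n, designX n d k i * designX n d k u)
        - (∑ k : Fin n, designX n d k i) * (∑ k : Fin n, designX n d k u) / n := by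
    simp only [Xbar, centerCols]
    set Si := ∑ k : Fin n, designX n d k i with hSidef
    set Su := ∑ k : Fin n, designX n d k u with hSudef
    rw [show (fun k : Fin n => (designX n d k i - Si / n) * (designX n d k u - Su / n))
        = fun k : Fin n => designX n d k i * designX n d k u - (Su/n) * designX n d k i
            - (Si/n) * designX n d k u + (Si/n) * (Su/n) from funext fun k => by ring]
    rw [Finset.sum_add_distrib, Finset.sum_sub_distrib, Finset.sum_sub_distrib,
      ← Finset.mul_sum, ← Finset.mul_sum, Finset.sum_const, Finset.card_univ,
      Fintype.card_fin, ← hSidef, ← hSudef]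
    field_simp
    have h2 : (n:ℝ)^2 * ((n:ℝ)⁻¹)^2 = 1 := by rw [← mul_pow, mul_inv_cancel₀ hn0, one_pow]
    linear_combination (Su * Si) * h2
  rw [expand, hT, hSi, hSu]
  rcases le_total ((i:ℕ)) ((u:ℕ)) with h | h
  · have e1 : max ((i:ℕ)) ((u:ℕ)) = (u:ℕ) := max_eq_right h
    have e2 : min ((i:ℕ)+1) ((u:ℕ)+1) = (i:ℕ)+1 := min_eq_left (by omega)
    have e3 : max ((i:ℕ)+1) ((u:ℕ)+1) = (u:ℕ)+1 := max_eq_right (by omega)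
    rw [e1, e2, e3, Nat.cast_sub hu, Nat.cast_sub hi]
    push_cast
    field_simp
    ring
  · have e1 : max ((i:ℕ)) ((u:ℕ)) = (i:ℕ) := max_eq_left h
    have e2 : min ((i:ℕ)+1) ((u:ℕ)+1) = (u:ℕ)+1 := min_eq_right (by omega)
    have e3 : max ((i:ℕ)+1) ((u:ℕ)+1) = (i:ℕ)+1 := max_eq_left (by omega)
    rw [e1, e2, e3, Nat.cast_sub hi, Nat.cast_sub hu]
    push_cast
    field_simp
    ring

/-- If `β*` has all rows zero except possibly row `u`, then the `i`-th row
of `X̄ᵀX̄β*` equals `dᵢ d_u (min(i,u)(n − max(i,u))/n) β*_{u,·}` (1-based indices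
`i ↦ (i:ℕ)+1`, `u ↦ (u:ℕ)+1`). -/
theorem statement8 (n : ℕ) (hn : 2 ≤ n) (d : Fin (n-1) → ℝ) (hd : ∀ j, 0 < d j)
    (p : ℕ) (u : Fin (n-1)) (βstar : Matrix (Fin (n-1)) (Fin p) ℝ)
    (hβ : ∀ i, i ≠ u → ∀ k, βstar i k = 0) :
    ∀ (i : Fin (n-1)) (k : Fin p),
      ((Xbar n d)ᵀ * Xbar n d * βstar) i k =
        d i * d u * (((min ((i : ℕ) + 1) ((u : ℕ) + 1) : ℕ) : ℝ)
          * ((n : ℝ) - ((max ((i : ℕ) + 1) ((u : ℕ) + 1) : ℕ) : ℝ)) / n) * βstar u k := by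
  intro i k
  rw [Matrix.mul_apply, Finset.sum_eq_single u]
  · rw [Matrix.mul_apply]
    simp only [Matrix.transpose_apply]
    rw [key n hn d i u]
  · intro b _ hb
    rw [hβ b hb k, mul_zero]
  · intro h
    exact absurd (Finset.mem_univ u) h
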